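/- For 1 ≤ m ≤ n, the sum over all parking functions π of length n of the number of m-cycles of π equals (m-1)! · C(n+1, m) · (n+1)^(n-m-1). Equivalently, the expected number of m-cycles of a uniformly random parking function of length n is (m-1)! · C(n+1, m)/(n+1)^m. -/

import Mathlib

/-- A parking function of length `n`. -/
def IsParkingFunction (n : ℕ) (π : Fin n → ℕ) : Prop :=
  (∀ i, 1 ≤ π i) ∧ ∃ σ : Equiv.Perm (Fin n),
    Monotone (π ∘ σ) ∧ ∀ i : Fin n, π (σ i) ≤ (i : ℕ) + 1

/-- The number of `m`-cycles of `π`, counted up to cyclic rotation. -/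
noncomputable def cycleCount (n m : ℕ) (π : Fin n → ℕ) : ℕ :=
  (Finset.univ.filter (fun c : Fin m ↪ Fin n =>
      ∀ j : Fin m, π (c j) = (c (finRotate m j) : ℕ) + 1)).card / m

open Finset

namespace PFAux

variable {n : ℕ}

/-- number of cars with value in `[1..k]` -/
def cnt (n : ℕ) (f : Fin n → ZMod (n+1)) (k : ℕ) : ℕ :=
  (univ.filter (fun i => 1 ≤ (f i).val ∧ (f i).val ≤ k)).card

/-- circular parking condition: the empty spot is `0`. -/
def Park (n : ℕ) (f : Fin n → ZMod (n+1)) : Prop :=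
  ∀ k, k ≤ n → k ≤ cnt n f k

instance : DecidablePred (Park n) := fun _ => Nat.decidableBallLE _ _

lemma card_filter_mem_eq_sum {α β : Type*} [DecidableEq β] [Fintype α] (g : α → β)
    (T : Finset β) :
    (univ.filter (fun a => g a ∈ T)).card = ∑ t ∈ T, (univ.filter (fun a => g a = t)).card := by
  rw [Finset.card_eq_sum_card_fiberwise (f := g) (s := univ.filter (fun a => g a ∈ T)) (t := T) (fun a ha => (mem_filter.mp ha).2)]
  refine Finset.sum_congr rfl fun b hb => ?_
  congr 1
  rw [Finset.filter_filter]
  apply Finset.filter_congr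
  intro a _
  constructor
  · exact fun h => h.2
  · exact fun h => ⟨h ▸ hb, h⟩

/-- fiber counts -/
def fib (n : ℕ) (f : Fin n → ZMod (n+1)) (t : ℕ) : ℕ :=
  (univ.filter (fun i => f i = (t : ZMod (n+1)))).card

lemma fib_period (f : Fin n → ZMod (n+1)) (t : ℕ) : fib n f (t + (n+1)) = fib n f t := by
  have h : ((t + (n+1) : ℕ) : ZMod (n+1)) = (t : ZMod (n+1)) := by
    rw [Nat.cast_add, ZMod.natCast_self, add_zero]
  unfold fib; rw [h]

def SumA (n : ℕ) (f : Fin n → ZMod (n+1)) (j : ℕ) : ℤ := ∑ t ∈ Ioc 0 j, (fib n f t : ℤ)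

def Gf (n : ℕ) (f : Fin n → ZMod (n+1)) (j : ℕ) : ℤ := SumA n f j - j

lemma cast_val_eq (x : ZMod (n+1)) : ((x.val : ℕ) : ZMod (n+1)) = x :=
  ZMod.natCast_rightInverse x

lemma sum_range_fib (f : Fin n → ZMod (n+1)) :
    ∑ t ∈ Finset.range (n+1), fib n f t = n := by
  have h := Finset.card_eq_sum_card_fiberwise
    (f := fun i => (f i).val) (s := (univ : Finset (Fin n))) (t := Finset.range (n+1))
    (fun i _ => Finset.mem_range.mpr (ZMod.val_lt _))
  rw [card_univ, Fintype.card_fin] at h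
  conv_rhs => rw [h]
  apply Finset.sum_congr rfl
  intro t ht
  unfold fib
  congr 1
  apply Finset.filter_congr
  intro i _
  constructor
  · intro he
    show (f i).val = t
    rw [he, ZMod.val_natCast_of_lt (Finset.mem_range.mp ht)]
  · intro hv
    replace hv : (f i).val = t := hv
    rw [← hv, cast_val_eq]

lemma sumA_base (f : Fin n → ZMod (n+1)) :
    ∑ t ∈ Ioc 0 (n+1), (fib n f t : ℤ) = n := by
  have h1 : (∑ t ∈ Ioc 0 n, (fib n f t : ℤ)) + fib n f (n+1)
      = ∑ t ∈ Ioc 0 (n+1), (fib n f t : ℤ) :=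
    (Finset.sum_Ioc_succ_top (by omega) _).symm
  have h2 : fib n f (n+1) = fib n f 0 := by
    have := fib_period f 0
    rwa [zero_add] at this
  have h3 : ∑ t ∈ Ioc 0 n, (fib n f t : ℤ) = ∑ i ∈ Finset.range n, (fib n f (i+1) : ℤ) := by
    apply Finset.sum_nbij' (fun t => t - 1) (fun i => i + 1)
    · intro a ha; simp only [Finset.mem_Ioc] at ha; simp only [Finset.mem_range]; omega
    · intro a ha; simp only [Finset.mem_range] at ha; simp only [Finset.mem_Ioc]; omega
    · intro a ha; simp only [Finset.mem_Ioc] at ha; omega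
    · intro a _; omega
    · intro a ha; simp only [Finset.mem_Ioc] at ha
      have hh : a - 1 + 1 = a := by omega
      rw [hh]
  have h4 : ∑ t ∈ Finset.range (n+1), (fib n f t : ℤ) = n := by
    rw [← Nat.cast_sum]
    exact_mod_cast congrArg (Nat.cast : ℕ → ℤ) (sum_range_fib f)
  rw [Finset.sum_range_succ'] at h4
  omega

lemma sumA_window (f : Fin n → ZMod (n+1)) (j : ℕ) :
    ∑ t ∈ Ioc j (j + (n+1)), (fib n f t : ℤ) = n := by
  induction j with
  | zero => simpa using sumA_base f
  | succ j ih =>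
    have h1 : (∑ t ∈ Ioc j (j+1), (fib n f t : ℤ)) + ∑ t ∈ Ioc (j+1) (j+1+(n+1)), (fib n f t : ℤ)
        = ∑ t ∈ Ioc j (j+1+(n+1)), (fib n f t : ℤ) :=
      Finset.sum_Ioc_consecutive _ (by omega) (by omega)
    have h2 : (∑ t ∈ Ioc j (j+(n+1)), (fib n f t : ℤ)) + ∑ t ∈ Ioc (j+(n+1)) (j+1+(n+1)), (fib n f t : ℤ)
        = ∑ t ∈ Ioc j (j+1+(n+1)), (fib n f t : ℤ) :=
      Finset.sum_Ioc_consecutive _ (by omega) (by omega)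
    have hb : j+1+(n+1) = (j+(n+1))+1 := by ring
    rw [hb] at h1 h2 ⊢
    rw [Nat.Ioc_succ_singleton, Finset.sum_singleton] at h1
    rw [Nat.Ioc_succ_singleton, Finset.sum_singleton] at h2
    have e3 : fib n f (j+(n+1)+1) = fib n f (j+1) := by
      have : j+(n+1)+1 = (j+1) + (n+1) := by ring
      rw [this, fib_period]
    rw [e3] at h2
    omega

lemma Gf_period (f : Fin n → ZMod (n+1)) (j : ℕ) :
    Gf n f (j + (n+1)) = Gf n f j - 1 := by
  have h : SumA n f j + ∑ t ∈ Ioc j (j + (n+1)), (fib n f t : ℤ) = SumA n f (j + (n+1)) :=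
    Finset.sum_Ioc_consecutive _ (by omega) (by omega)
  rw [sumA_window] at h
  unfold Gf
  push_cast
  omega

lemma cnt_eq_sum (g : Fin n → ZMod (n+1)) (j : ℕ) (hj : j ≤ n) :
    cnt n g j = ∑ t ∈ Ioc 0 j, (univ.filter (fun i => g i = (t : ZMod (n+1)))).card := by
  have hinj : ∀ a ∈ Ioc 0 j, ∀ b ∈ Ioc 0 j,
      (a : ZMod (n+1)) = (b : ZMod (n+1)) → a = b := by
    intro a ha b hb hab
    simp only [Finset.mem_Ioc] at ha hb
    have ha' : ((a : ZMod (n+1))).val = a := ZMod.val_natCast_of_lt (by omega)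
    have hb' : ((b : ZMod (n+1))).val = b := ZMod.val_natCast_of_lt (by omega)
    rw [← ha', ← hb', hab]
  have hmem : ∀ i, (1 ≤ (g i).val ∧ (g i).val ≤ j) ↔ g i ∈ (Ioc 0 j).image (fun t : ℕ => (t : ZMod (n+1))) := by
    intro i
    constructor
    · intro ⟨h1, h2⟩
      refine Finset.mem_image.mpr ⟨(g i).val, ?_, cast_val_eq _⟩
      simp only [Finset.mem_Ioc]; omega
    · intro h
      obtain ⟨t, ht, he⟩ := Finset.mem_image.mp h
      simp only [Finset.mem_Ioc] at ht
      have : ((t : ZMod (n+1))).val = t := ZMod.val_natCast_of_lt (by omega)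
      rw [← he, this]
      omega
  unfold cnt
  rw [Finset.filter_congr (fun i _ => (hmem i))]
  rw [card_filter_mem_eq_sum g]
  rw [Finset.sum_image hinj]

lemma cnt_shift (f : Fin n → ZMod (n+1)) (k : ZMod (n+1)) (j : ℕ) (hj : j ≤ n) :
    (cnt n (fun i => f i + k) j : ℤ)
      = SumA n f (((n+1) - k.val) + j) - SumA n f ((n+1) - k.val) := by
  set K := (n+1) - k.val with hK
  have hKcast : ((K : ℕ) : ZMod (n+1)) = - k := by
    have hk : k.val ≤ n + 1 := le_of_lt (ZMod.val_lt k)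
    rw [hK, Nat.cast_sub hk, ZMod.natCast_self, cast_val_eq, zero_sub]
  have step1 : cnt n (fun i => f i + k) j
      = ∑ t ∈ Ioc 0 j, (univ.filter (fun i => f i + k = (t : ZMod (n+1)))).card :=
    cnt_eq_sum _ j hj
  have step2 : ∀ t : ℕ, (univ.filter (fun i => f i + k = (t : ZMod (n+1)))).card = fib n f (t + K) := by
    intro t
    unfold fib
    congr 1
    apply Finset.filter_congr
    intro i _
    constructor
    · intro h
      push_cast
      rw [hKcast, ← h]
      ring
    · intro h
      replace h : f i = ((t + K : ℕ) : ZMod (n+1)) := h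
      rw [h]
      push_cast
      rw [hKcast]
      ring
  have step3 : ∑ t ∈ Ioc 0 j, (fib n f (t + K) : ℤ) = ∑ u ∈ Ioc K (K + j), (fib n f u : ℤ) := by
    apply Finset.sum_nbij' (fun t => t + K) (fun u => u - K)
    · intro a ha; simp only [Finset.mem_Ioc] at ha ⊢; omega
    · intro a ha; simp only [Finset.mem_Ioc] at ha ⊢; omega
    · intro a _; omega
    · intro a ha; simp only [Finset.mem_Ioc] at ha; omega
    · intro a _; rfl
  have step4 : SumA n f K + ∑ u ∈ Ioc K (K + j), (fib n f u : ℤ) = SumA n f (K + j) :=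
    Finset.sum_Ioc_consecutive _ (by omega) (by omega)
  have hc : ((cnt n (fun i => f i + k) j : ℕ) : ℤ)
      = ∑ t ∈ Ioc 0 j, (fib n f (t + K) : ℤ) := by
    rw [step1]
    push_cast
    apply Finset.sum_congr rfl
    intro t _
    exact_mod_cast congrArg (Nat.cast : ℕ → ℤ) (step2 t)
  rw [hc, step3]
  have : K + j = ((n+1) - k.val) + j := by rw [hK]
  omega

lemma park_shift_iff (f : Fin n → ZMod (n+1)) (k : ZMod (n+1)) :
    Park n (fun i => f i + k) ↔
      ∀ j, 0 < j → j ≤ n → Gf n f ((n+1) - k.val) ≤ Gf n f (((n+1) - k.val) + j) := by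
  constructor
  · intro hp j hj0 hjn
    have h := hp j hjn
    have hcs := cnt_shift f k j hjn
    unfold Gf
    push_cast
    omega
  · intro hG j hjn
    rcases Nat.eq_zero_or_pos j with hj | hj
    · omega
    have h := hG j hj hjn
    have hcs := cnt_shift f k j hjn
    unfold Gf at h
    push_cast at h ⊢
    omega

theorem existsUnique_park_shift (f : Fin n → ZMod (n+1)) :
    ∃! k : ZMod (n+1), Park n (fun i => f i + k) := by
  classical
  -- the G-condition on K := (n+1) - k.val
  set C : ℕ → Prop := fun K => ∀ j, 0 < j → j ≤ n → Gf n f K ≤ Gf n f (K + j) with hC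
  -- uniqueness of K in Icc 1 (n+1) satisfying C
  have huniq : ∀ K₁ K₂, K₁ ∈ Icc 1 (n+1) → K₂ ∈ Icc 1 (n+1) → C K₁ → C K₂ → K₁ = K₂ := by
    intro K₁ K₂ h1 h2 hc1 hc2
    simp only [Finset.mem_Icc] at h1 h2
    by_contra hne
    -- wlog K₁ < K₂
    rcases Nat.lt_or_ge K₁ K₂ with hlt | hge
    · have e1 := hc1 (K₂ - K₁) (by omega) (by omega)
      have e2 := hc2 (K₁ + (n+1) - K₂) (by omega) (by omega)
      have hK12 : K₁ + (K₂ - K₁) = K₂ := by omega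
      have hK21 : K₂ + (K₁ + (n+1) - K₂) = K₁ + (n+1) := by omega
      rw [hK12] at e1
      rw [hK21] at e2
      have := Gf_period f K₁
      omega
    · have hlt : K₂ < K₁ := by omega
      have e1 := hc2 (K₁ - K₂) (by omega) (by omega)
      have e2 := hc1 (K₂ + (n+1) - K₁) (by omega) (by omega)
      have hK12 : K₂ + (K₁ - K₂) = K₁ := by omega
      have hK21 : K₁ + (K₂ + (n+1) - K₁) = K₂ + (n+1) := by omega
      rw [hK12] at e1
      rw [hK21] at e2
      have := Gf_period f K₂
      omega
  -- existence of K₀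
  have hne : (Icc 1 (n+1) : Finset ℕ).Nonempty := ⟨1, by simp⟩
  set μ := (Icc 1 (n+1) : Finset ℕ).inf' hne (Gf n f) with hμ
  have hBne : ((Icc 1 (n+1) : Finset ℕ).filter (fun K => Gf n f K = μ)).Nonempty := by
    obtain ⟨K, hK, hKe⟩ := Finset.exists_mem_eq_inf' hne (Gf n f)
    exact ⟨K, Finset.mem_filter.mpr ⟨hK, hKe.symm⟩⟩
  set K₀ := ((Icc 1 (n+1) : Finset ℕ).filter (fun K => Gf n f K = μ)).min' hBne with hK₀
  have hK₀mem : K₀ ∈ (Icc 1 (n+1) : Finset ℕ).filter (fun K => Gf n f K = μ) :=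
    Finset.min'_mem _ _
  have hK₀Icc : K₀ ∈ Icc 1 (n+1) := (Finset.mem_filter.mp hK₀mem).1
  have hK₀G : Gf n f K₀ = μ := (Finset.mem_filter.mp hK₀mem).2
  have hmin : ∀ K ∈ Icc 1 (n+1), μ ≤ Gf n f K := fun K hK => Finset.inf'_le _ hK
  have hstrict : ∀ K ∈ Icc 1 (n+1), K < K₀ → μ + 1 ≤ Gf n f K := by
    intro K hK hKlt
    have h1 : μ ≤ Gf n f K := hmin K hK
    rcases eq_or_lt_of_le h1 with he | hl
    · exfalso
      have : K₀ ≤ K := Finset.min'_le _ _ (Finset.mem_filter.mpr ⟨hK, he.symm⟩)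
      omega
    · omega
  have hCK₀ : C K₀ := by
    intro j hj0 hjn
    simp only [Finset.mem_Icc] at hK₀Icc
    rcases le_or_gt (K₀ + j) (n+1) with hle | hgt
    · have : K₀ + j ∈ Icc 1 (n+1) := Finset.mem_Icc.mpr ⟨by omega, hle⟩
      have := hmin _ this
      omega
    · set K' := K₀ + j - (n+1) with hK'
      have hK'Icc : K' ∈ Icc 1 (n+1) := Finset.mem_Icc.mpr ⟨by omega, by omega⟩
      have hK'lt : K' < K₀ := by omega
      have h1 := hstrict K' hK'Icc hK'lt
      have h2 : K₀ + j = K' + (n+1) := by omega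
      rw [h2, Gf_period]
      omega
  -- package to ZMod
  have hval : ∀ K, K ∈ Icc 1 (n+1) → ((((n+1) - K : ℕ) : ZMod (n+1)).val) = (n+1) - K := by
    intro K hK
    simp only [Finset.mem_Icc] at hK
    exact ZMod.val_natCast_of_lt (by omega)
  refine ⟨(((n+1) - K₀ : ℕ) : ZMod (n+1)), ?_, ?_⟩
  · show Park n fun i => f i + (((n+1) - K₀ : ℕ) : ZMod (n+1))
    rw [park_shift_iff]
    have h1 := hval K₀ hK₀Icc
    simp only [Finset.mem_Icc] at hK₀Icc
    have h2 : (n+1) - ((((n+1) - K₀ : ℕ) : ZMod (n+1)).val) = K₀ := by omega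
    rw [h2]
    exact hCK₀
  · intro k hk
    replace hk : Park n (fun i => f i + k) := hk
    rw [park_shift_iff] at hk
    set K := (n+1) - k.val with hKdef
    have hkv : k.val < n + 1 := ZMod.val_lt k
    have hKIcc : K ∈ Icc 1 (n+1) := Finset.mem_Icc.mpr ⟨by omega, by omega⟩
    have hCK : C K := fun j hj0 hjn => hk j hj0 hjn
    have hKK₀ : K = K₀ := huniq K K₀ hKIcc hK₀Icc hCK hCK₀
    have : k.val = (n+1) - K₀ := by
      simp only [Finset.mem_Icc] at hK₀Icc
      omega
    rw [← this, cast_val_eq]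

lemma park_val (f : Fin n → ZMod (n+1)) (hf : Park n f) (i : Fin n) :
    1 ≤ (f i).val ∧ (f i).val ≤ n := by
  have h := hf n le_rfl
  unfold cnt at h
  have hle : (univ.filter (fun i => 1 ≤ (f i).val ∧ (f i).val ≤ n)).card ≤ n := by
    calc _ ≤ (univ : Finset (Fin n)).card := Finset.card_filter_le _ _
    _ = n := by rw [card_univ, Fintype.card_fin]
  have huniv : (univ.filter (fun i => 1 ≤ (f i).val ∧ (f i).val ≤ n)) = univ := by
    apply Finset.eq_univ_of_card
    rw [Fintype.card_fin]
    omega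
  have := Finset.mem_filter.mp (huniv ▸ Finset.mem_univ i)
  exact this.2

/-- counting characterization of parking functions over ℕ -/
def NPark (n : ℕ) (π : Fin n → ℕ) : Prop :=
  (∀ i, 1 ≤ π i) ∧ ∀ k, k ≤ n → k ≤ (univ.filter (fun i => π i ≤ k)).card

lemma card_filter_coe_lt (k : ℕ) (hk : k ≤ n) :
    (univ.filter (fun i : Fin n => (i : ℕ) < k)).card = k := by
  have : univ.filter (fun i : Fin n => (i : ℕ) < k)
      = (univ : Finset (Fin k)).map (Fin.castLEEmb hk) := by
    ext x
    simp only [Finset.mem_filter, Finset.mem_univ, true_and, Finset.mem_map]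
    constructor
    · intro h
      refine ⟨⟨(x : ℕ), h⟩, ?_⟩
      ext
      simp
    · rintro ⟨y, -, rfl⟩
      simpa using y.2
  rw [this, Finset.card_map, card_univ, Fintype.card_fin]

theorem isParkingFunction_iff (π : Fin n → ℕ) :
    IsParkingFunction n π ↔ NPark n π := by
  constructor
  · rintro ⟨h1, σ, hmono, hbd⟩
    refine ⟨h1, fun k hk => ?_⟩
    have hsub : ∀ i ∈ univ.filter (fun i : Fin n => (i : ℕ) < k),
        σ i ∈ univ.filter (fun i => π i ≤ k) := by
      intro i hi
      simp only [Finset.mem_filter, Finset.mem_univ, true_and] at hi ⊢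
      have := hbd i
      omega
    have hcard := Finset.card_le_card_of_injOn _ hsub
      (fun a _ b _ h => σ.injective h)
    rwa [card_filter_coe_lt k hk] at hcard
  · rintro ⟨h1, h2⟩
    have hmono := Tuple.monotone_sort π
    refine ⟨h1, Tuple.sort π, hmono, ?_⟩
    intro i
    by_contra hcon
    push_neg at hcon
    have hk : (i : ℕ) + 1 ≤ n := i.2
    have hsub : univ.filter (fun x => π x ≤ (i : ℕ) + 1)
        ⊆ (univ.filter (fun j : Fin n => (j : ℕ) < (i : ℕ))).image (Tuple.sort π) := by
      intro x hx
      simp only [Finset.mem_filter, Finset.mem_univ, true_and] at hx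
      have hj : (Tuple.sort π).symm x < i := by
        by_contra hge
        push_neg at hge
        have hle := hmono hge
        simp only [Function.comp_apply, Equiv.apply_symm_apply] at hle
        omega
      refine Finset.mem_image.mpr ⟨(Tuple.sort π).symm x, ?_, by simp⟩
      simp only [Finset.mem_filter, Finset.mem_univ, true_and]
      exact hj
    have hc1 := h2 ((i : ℕ) + 1) hk
    have hc2 := Finset.card_le_card hsub
    have hc3 : ((univ.filter (fun j : Fin n => (j : ℕ) < (i : ℕ))).image (Tuple.sort π)).card
        ≤ (univ.filter (fun j : Fin n => (j : ℕ) < (i : ℕ))).card := Finset.card_image_le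
    rw [card_filter_coe_lt (i : ℕ) (le_of_lt i.2)] at hc3
    omega

lemma npark_le (π : Fin n → ℕ) (hπ : NPark n π) (i : Fin n) : π i ≤ n := by
  obtain ⟨h1, h2⟩ := hπ
  have h := h2 n le_rfl
  have hle : (univ.filter (fun i => π i ≤ n)).card ≤ n := by
    calc _ ≤ (univ : Finset (Fin n)).card := Finset.card_filter_le _ _
    _ = n := by rw [card_univ, Fintype.card_fin]
  have huniv : (univ.filter (fun i => π i ≤ n)) = univ := by
    apply Finset.eq_univ_of_card
    rw [Fintype.card_fin]
    omega
  have hmem : i ∈ univ.filter (fun i => π i ≤ n) := by rw [huniv]; exact Finset.mem_univ i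
  exact (Finset.mem_filter.mp hmem).2

def toZ (n : ℕ) (π : Fin n → ℕ) : Fin n → ZMod (n+1) := fun i => (π i : ZMod (n+1))
def toN (n : ℕ) (f : Fin n → ZMod (n+1)) : Fin n → ℕ := fun i => (f i).val

lemma npark_toN (f : Fin n → ZMod (n+1)) (hf : Park n f) : NPark n (toN n f) := by
  refine ⟨fun i => (park_val f hf i).1, fun k hk => ?_⟩
  have h := hf k hk
  unfold cnt at h
  calc k ≤ (univ.filter (fun i => 1 ≤ (f i).val ∧ (f i).val ≤ k)).card := h
  _ ≤ (univ.filter (fun i => toN n f i ≤ k)).card := by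
      apply Finset.card_le_card
      intro i hi
      simp only [Finset.mem_filter, Finset.mem_univ, true_and] at hi ⊢
      exact hi.2

lemma toZ_toN (f : Fin n → ZMod (n+1)) : toZ n (toN n f) = f := by
  funext i
  exact cast_val_eq _

lemma toN_toZ (π : Fin n → ℕ) (hπ : ∀ i, π i ≤ n) : toN n (toZ n π) = π := by
  funext i
  exact ZMod.val_natCast_of_lt (by have := hπ i; omega)

lemma park_toZ (π : Fin n → ℕ) (hπ : NPark n π) : Park n (toZ n π) := by
  intro k hk
  have h2 := hπ.2 k hk
  unfold cnt
  calc k ≤ (univ.filter (fun i => π i ≤ k)).card := h2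
  _ ≤ _ := by
      apply Finset.card_le_card
      intro i hi
      simp only [Finset.mem_filter, Finset.mem_univ, true_and] at hi ⊢
      have hv : (toZ n π i).val = π i := by
        have := npark_le π hπ i
        exact ZMod.val_natCast_of_lt (by omega)
      rw [hv]
      exact ⟨hπ.1 i, hi⟩

/-- the finset of parking functions (as `ℕ`-valued functions) -/
noncomputable def PFinset (n : ℕ) : Finset (Fin n → ℕ) :=
  ((univ : Finset (Fin n → ZMod (n+1))).filter (Park n)).image (toN n)

lemma coe_PFinset : {π : Fin n → ℕ | IsParkingFunction n π} = ↑(PFinset n) := by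
  ext π
  simp only [Set.mem_setOf_eq, PFinset, Finset.coe_image, Set.mem_image, Finset.mem_coe,
    Finset.mem_filter, Finset.mem_univ, true_and]
  rw [isParkingFunction_iff]
  constructor
  · intro h
    exact ⟨toZ n π, park_toZ π h, toN_toZ π (npark_le π h)⟩
  · rintro ⟨f, hf, rfl⟩
    exact npark_toN f hf

lemma toN_injOn : Set.InjOn (toN n) ((univ : Finset (Fin n → ZMod (n+1))).filter (Park n)) := by
  intro f _ g _ h
  have := congrArg (toZ n) h
  rwa [toZ_toN, toZ_toN] at this

lemma card_PFinset : (PFinset n).card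
    = ((univ : Finset (Fin n → ZMod (n+1))).filter (Park n)).card :=
  Finset.card_image_of_injOn toN_injOn

/-- Pollak's argument: among all shifts of `f`, exactly one is parking.  Counting version,
for any shift-invariant predicate `Q`. -/
lemma card_park_shift (Q : (Fin n → ZMod (n+1)) → Prop) [DecidablePred Q]
    (hQ : ∀ (f : Fin n → ZMod (n+1)) (k : ZMod (n+1)), Q f → Q (fun i => f i + k)) :
    Fintype.card {f : Fin n → ZMod (n+1) // Q f ∧ Park n f} * (n+1)
      = Fintype.card {f : Fin n → ZMod (n+1) // Q f} := by
  classical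
  have E : ({f : Fin n → ZMod (n+1) // Q f ∧ Park n f} × ZMod (n+1))
      ≃ {f : Fin n → ZMod (n+1) // Q f} := by
    refine
      { toFun := fun p => ⟨fun i => p.1.1 i + p.2, hQ _ _ p.1.2.1⟩
        invFun := fun g => ?_
        left_inv := ?_
        right_inv := ?_ }
    · refine ⟨⟨fun i => g.1 i + Classical.choose (existsUnique_park_shift g.1).exists,
        hQ _ _ g.2, Classical.choose_spec (existsUnique_park_shift g.1).exists⟩,
        - Classical.choose (existsUnique_park_shift g.1).exists⟩
    · rintro ⟨⟨f, hQf, hPf⟩, k⟩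
      simp only []
      set g : Fin n → ZMod (n+1) := fun i => f i + k with hg
      have hup := existsUnique_park_shift g
      have hk : Park n (fun i => g i + (-k)) := by
        have : (fun i => g i + (-k)) = f := by funext i; rw [hg]; ring
        rw [this]; exact hPf
      have hcs : Classical.choose hup.exists = - k :=
        hup.unique (Classical.choose_spec hup.exists) hk
      have h1 : (fun i => g i + Classical.choose hup.exists) = f := by
        funext i
        rw [hcs, hg]
        ring
      have h2 : - Classical.choose hup.exists = k := by rw [hcs]; ring
      exact Prod.ext (Subtype.ext h1) h2
    · rintro ⟨g, hQg⟩
      simp only []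
      apply Subtype.ext
      funext i
      simp only []
      ring
  have := Fintype.card_congr E
  rwa [Fintype.card_prod, ZMod.card] at this

/-- free cyclic action divisibility -/
lemma card_dvd_of_free_cycle {α : Type*} [DecidableEq α] {g : α → α}
    (hg : Function.Injective g) {m : ℕ} (hm : 0 < m) (S : Finset α)
    (hS : ∀ a ∈ S, g a ∈ S) (hper : ∀ a ∈ S, ∀ t : ℕ, g^[t] a = a ↔ m ∣ t) :
    m ∣ S.card := by
  classical
  induction S using Finset.strongInduction with
  | _ S ih =>
  rcases S.eq_empty_or_nonempty with rfl | ⟨a, ha⟩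
  · simp
  · have hiter : ∀ t, g^[t] a ∈ S := by
      intro t
      induction t with
      | zero => simpa using ha
      | succ t iht => rw [Function.iterate_succ_apply']; exact hS _ iht
    set O : Finset α := (Finset.range m).image (fun t => g^[t] a) with hO
    have hOS : O ⊆ S := by
      intro x hx
      obtain ⟨t, -, rfl⟩ := Finset.mem_image.mp hx
      exact hiter t
    have hOcard : O.card = m := by
      rw [hO, Finset.card_image_of_injOn, Finset.card_range]
      intro t ht t' ht' he
      simp only [Finset.coe_range, Set.mem_Iio] at ht ht'
      replace he : g^[t] a = g^[t'] a := he
      rcases le_total t t' with hle | hle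
      · have h2 : g^[t + (t' - t)] a = g^[t] a := by rw [Nat.add_sub_cancel' hle, he]
        rw [Function.iterate_add_apply] at h2
        have h3 : g^[t' - t] a = a := (hg.iterate t) h2
        have h4 := (hper a ha _).mp h3
        have h5 : t' - t = 0 := Nat.eq_zero_of_dvd_of_lt h4 (by omega) |>.symm ▸ rfl
        omega
      · have h2 : g^[t' + (t - t')] a = g^[t'] a := by rw [Nat.add_sub_cancel' hle, ← he]
        rw [Function.iterate_add_apply] at h2
        have h3 : g^[t - t'] a = a := (hg.iterate t') h2
        have h4 := (hper a ha _).mp h3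
        have h5 : t - t' = 0 := Nat.eq_zero_of_dvd_of_lt h4 (by omega) |>.symm ▸ rfl
        omega
    have hgm : g^[m] a = a := (hper a ha m).mpr dvd_rfl
    have hS' : ∀ b ∈ S \ O, g b ∈ S \ O := by
      intro b hb
      obtain ⟨hbS, hbO⟩ := Finset.mem_sdiff.mp hb
      refine Finset.mem_sdiff.mpr ⟨hS b hbS, ?_⟩
      intro hgbO
      obtain ⟨t, ht, he⟩ := Finset.mem_image.mp hgbO
      rw [Finset.mem_range] at ht
      apply hbO
      replace he : g^[t] a = g b := he
      rcases Nat.eq_zero_or_pos t with rfl | htpos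
      · -- g b = a = g^[m] a, so b = g^[m-1] a
        simp only [Function.iterate_zero_apply] at he
        have h4 : g (g^[m-1] a) = a := by
          have h5 := Function.iterate_succ_apply' g (m-1) a
          have hm1 : (m - 1).succ = m := by omega
          rw [hm1] at h5
          rw [← h5, hgm]
        have hb' : b = g^[m-1] a := hg (by rw [h4, he])
        exact Finset.mem_image.mpr ⟨m-1, Finset.mem_range.mpr (by omega), hb'.symm⟩
      · obtain ⟨t', rfl⟩ : ∃ t', t = t' + 1 := ⟨t - 1, by omega⟩
        rw [Function.iterate_succ_apply'] at he
        have hb' : b = g^[t'] a := hg he.symm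
        exact Finset.mem_image.mpr ⟨t', Finset.mem_range.mpr (by omega), hb'.symm⟩
    have hssub : S \ O ⊂ S := by
      refine Finset.ssubset_iff_of_subset (Finset.sdiff_subset) |>.mpr ?_
      refine ⟨a, ha, ?_⟩
      intro haO
      exact (Finset.mem_sdiff.mp haO).2
        (Finset.mem_image.mpr ⟨0, Finset.mem_range.mpr hm, rfl⟩)
    have hdvd := ih (S \ O) hssub hS' (fun b hb => hper b (Finset.mem_sdiff.mp hb).1)
    have hcard : (S \ O).card = S.card - m := by
      rw [Finset.card_sdiff_of_subset hOS, hOcard]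
    have hmle : m ≤ S.card := hOcard ▸ Finset.card_le_card hOS
    obtain ⟨c, hc⟩ := hdvd
    refine ⟨c + 1, ?_⟩
    rw [Nat.mul_add, Nat.mul_one, ← hc]
    omega

/-- every embedding extends to a permutation (relative to another embedding) -/
lemma exists_perm_comp {α β : Type*} [Fintype α] [Fintype β] [DecidableEq β]
    (e₁ e₂ : α ↪ β) : ∃ σ : Equiv.Perm β, ∀ a, σ (e₁ a) = e₂ a := by
  classical
  have hcard : Fintype.card ((Set.range e₁)ᶜ : Set β) = Fintype.card ((Set.range e₂)ᶜ : Set β) := by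
    rw [Fintype.card_compl_set, Fintype.card_compl_set,
      Set.card_range_of_injective e₁.injective, Set.card_range_of_injective e₂.injective]
  set eS : (Set.range e₁) ≃ (Set.range e₂) :=
    (Equiv.ofInjective e₁ e₁.injective).symm.trans (Equiv.ofInjective e₂ e₂.injective) with heS
  set eC : ((Set.range e₁)ᶜ : Set β) ≃ ((Set.range e₂)ᶜ : Set β) :=
    Fintype.equivOfCardEq hcard with heC
  refine ⟨(Equiv.Set.sumCompl (Set.range e₁)).symm.trans
    ((eS.sumCongr eC).trans (Equiv.Set.sumCompl (Set.range e₂))), ?_⟩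
  intro a
  have h1 : (Equiv.Set.sumCompl (Set.range e₁)).symm (e₁ a)
      = Sum.inl ⟨e₁ a, Set.mem_range_self a⟩ := by
    rw [Equiv.symm_apply_eq]
    simp
  simp only [Equiv.trans_apply, h1, Equiv.sumCongr_apply, Sum.map_inl]
  have h2 : eS ⟨e₁ a, Set.mem_range_self a⟩ = ⟨e₂ a, Set.mem_range_self a⟩ := by
    rw [heS]
    simp only [Equiv.trans_apply]
    have : (⟨e₁ a, Set.mem_range_self a⟩ : Set.range e₁) = Equiv.ofInjective e₁ e₁.injective a := by
      apply Subtype.ext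
      simp
    rw [this, Equiv.symm_apply_apply]
    apply Subtype.ext
    simp
  rw [h2]
  simp

section Rot

variable {m : ℕ}

open Fin.NatCast

lemma finRotate_iterate (m' : ℕ) (t : ℕ) (j : Fin (m'+1)) :
    (finRotate (m'+1))^[t] j = j + (t : Fin (m'+1)) := by
  induction t with
  | zero => simp
  | succ t ih =>
    rw [Function.iterate_succ_apply', ih, finRotate_succ_apply]
    rw [Nat.cast_add, Nat.cast_one, add_assoc]

lemma rot_g_iterate {n : ℕ} (t : ℕ) (c : Fin m ↪ Fin n) (j : Fin m) :
    ((fun c : Fin m ↪ Fin n => (finRotate m).toEmbedding.trans c)^[t] c) j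
      = c ((finRotate m)^[t] j) := by
  induction t generalizing c j with
  | zero => simp
  | succ t ih =>
    rw [Function.iterate_succ_apply, ih]
    simp only [Function.Embedding.trans_apply, Equiv.coe_toEmbedding]
    congr 1
    rw [← Function.iterate_succ_apply' (⇑(finRotate m)) t j]

lemma dvd_card_cycle_filter {n : ℕ} (hm : 0 < m) (P : Fin n → ℕ → Prop)
    [∀ i k, Decidable (P i k)] :
    m ∣ (univ.filter (fun c : Fin m ↪ Fin n =>
      ∀ j : Fin m, P (c j) ((c (finRotate m j) : ℕ)))).card := by
  classical
  obtain ⟨m', rfl⟩ : ∃ m', m = m' + 1 := ⟨m - 1, by omega⟩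
  set g : (Fin (m'+1) ↪ Fin n) → (Fin (m'+1) ↪ Fin n) :=
    fun c => (finRotate (m'+1)).toEmbedding.trans c with hgdef
  have hginj : Function.Injective g := by
    intro c c' h
    ext x
    have h1 := congrArg (fun d : Fin (m'+1) ↪ Fin n => d ((finRotate (m'+1)).symm x)) h
    simp only [hgdef, Function.Embedding.trans_apply, Equiv.coe_toEmbedding,
      Equiv.apply_symm_apply] at h1
    exact congrArg Fin.val h1
  apply card_dvd_of_free_cycle hginj hm
  · intro c hc
    simp only [Finset.mem_filter, Finset.mem_univ, true_and] at hc ⊢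
    intro j
    exact hc (finRotate (m'+1) j)
  · intro c _ t
    constructor
    · intro h
      have h0 := congrArg (fun d : Fin (m'+1) ↪ Fin n => d 0) h
      rw [rot_g_iterate, finRotate_iterate, zero_add] at h0
      have : (t : Fin (m'+1)) = 0 := c.injective h0
      exact Fin.natCast_eq_zero.mp this
    · intro h
      have hz : (t : Fin (m'+1)) = 0 := Fin.natCast_eq_zero.mpr h
      ext j
      rw [rot_g_iterate, finRotate_iterate, hz, add_zero]

end Rot

section Main

variable {m : ℕ}

def CondZ (n m : ℕ) (f : Fin n → ZMod (n+1)) (c : Fin m ↪ Fin n) : Prop :=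
  ∀ j : Fin m, f (c j) = ((c (finRotate m j) : ℕ) : ZMod (n+1)) + 1

instance {f : Fin n → ZMod (n+1)} : DecidablePred (CondZ n m f) := fun _ => by
  unfold CondZ; infer_instance

lemma val_cast_fin (x : Fin n) : (((x : ℕ) : ZMod (n+1))).val = (x : ℕ) :=
  ZMod.val_natCast_of_lt (by omega)

lemma condZ_iff_condN (f : Fin n → ZMod (n+1)) (c : Fin m ↪ Fin n) :
    (∀ j : Fin m, toN n f (c j) = (c (finRotate m j) : ℕ) + 1) ↔ CondZ n m f c := by
  unfold CondZ toN
  constructor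
  · intro h j
    have := h j
    have h2 : ((((f (c j)).val : ℕ)) : ZMod (n+1)) = (((c (finRotate m j) : ℕ) + 1 : ℕ) : ZMod (n+1)) := by
      rw [this]
    rw [cast_val_eq] at h2
    rw [h2]
    push_cast
    ring
  · intro h j
    have := h j
    rw [this]
    have hlt : (c (finRotate m j) : ℕ) + 1 < n + 1 := by
      have := (c (finRotate m j)).2
      omega
    have : (((c (finRotate m j) : ℕ) : ZMod (n+1)) + 1) = (((c (finRotate m j) : ℕ) + 1 : ℕ) : ZMod (n+1)) := by
      push_cast
      ring
    rw [this, ZMod.val_natCast_of_lt hlt]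

lemma cycleCount_toN (hm : 0 < m) (f : Fin n → ZMod (n+1)) (hf : Park n f) :
    (cycleCount n m (toN n f) : ℚ)
      = (Fintype.card {c : Fin m ↪ Fin n // CondZ n m f c} : ℚ) / m := by
  classical
  have hfe : (univ.filter (fun c : Fin m ↪ Fin n =>
        ∀ j : Fin m, toN n f (c j) = (c (finRotate m j) : ℕ) + 1))
      = univ.filter (CondZ n m f) :=
    Finset.filter_congr (fun c _ => by
      constructor
      · intro h; exact (condZ_iff_condN f c).mp h
      · intro h; exact (condZ_iff_condN f c).mpr h)
  have hdvd : m ∣ (univ.filter (fun c : Fin m ↪ Fin n =>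
        ∀ j : Fin m, toN n f (c j) = (c (finRotate m j) : ℕ) + 1)).card := by
    exact dvd_card_cycle_filter hm (fun i k => toN n f i = k + 1)
  have hcard : Fintype.card {c : Fin m ↪ Fin n // CondZ n m f c}
      = (univ.filter (CondZ n m f)).card := Fintype.card_subtype _
  unfold cycleCount
  rw [hcard, ← hfe]
  rw [Nat.cast_div hdvd (Nat.cast_ne_zero.mpr (by omega) : (m:ℚ) ≠ 0)]

def InjPre (n m : ℕ) (hmn : m ≤ n) (f : Fin n → ZMod (n+1)) : Prop :=
  Function.Injective (fun j : Fin m => f (Fin.castLE hmn j))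

instance {hmn : m ≤ n} : DecidablePred (InjPre n m hmn) := fun _ => by
  unfold InjPre; infer_instance

lemma park_comp (f : Fin n → ZMod (n+1)) (σ : Equiv.Perm (Fin n)) :
    Park n (fun i => f (σ i)) ↔ Park n f := by
  have hcnt : ∀ k, cnt n (fun i => f (σ i)) k = cnt n f k := by
    intro k
    unfold cnt
    apply Finset.card_bij (fun a _ => σ a)
    · intro a ha
      simp only [Finset.mem_filter, Finset.mem_univ, true_and] at ha ⊢
      exact ha
    · intro a _ b _ h
      exact σ.injective h
    · intro b hb
      refine ⟨σ.symm b, ?_, by simp⟩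
      simp only [Finset.mem_filter, Finset.mem_univ, true_and, Equiv.apply_symm_apply] at hb ⊢
      exact hb
  constructor
  · intro h k hk; rw [← hcnt k]; exact h k hk
  · intro h k hk; rw [hcnt k]; exact h k hk

lemma cast_fin_inj {x y : Fin n} (h : ((x : ℕ) : ZMod (n+1)) = ((y : ℕ) : ZMod (n+1))) :
    x = y := by
  have hx := val_cast_fin x
  have hy := val_cast_fin y
  rw [h] at hx
  apply Fin.ext
  omega

/-- The key bijection: pairs (parking f, cycle c) correspond to parking functions
with injective prefix. -/
lemma card_X1_eq_card_Y (hm : 0 < m) (hmn : m ≤ n) :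
    Fintype.card {p : (Fin n → ZMod (n+1)) × (Fin m ↪ Fin n) // Park n p.1 ∧ CondZ n m p.1 p.2}
      = Fintype.card {f : Fin n → ZMod (n+1) // InjPre n m hmn f ∧ Park n f} := by
  classical
  -- a permutation extending each embedding
  set Sig : (Fin m ↪ Fin n) → Equiv.Perm (Fin n) :=
    fun c => Classical.choose (exists_perm_comp (Fin.castLEEmb hmn) c) with hSigDef
  have hSig : ∀ (c : Fin m ↪ Fin n) (j : Fin m), (Sig c) (Fin.castLE hmn j) = c j := by
    intro c j
    exact Classical.choose_spec (exists_perm_comp (Fin.castLEEmb hmn) c) j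
  set F : {p : (Fin n → ZMod (n+1)) × (Fin m ↪ Fin n) // Park n p.1 ∧ CondZ n m p.1 p.2}
      → {f : Fin n → ZMod (n+1) // InjPre n m hmn f ∧ Park n f} :=
    fun p => ⟨fun i => p.1.1 ((Sig p.1.2) i), by
      obtain ⟨⟨f, c⟩, hP, hC⟩ := p
      replace hP : Park n f := hP
      replace hC : CondZ n m f c := hC
      constructor
      · -- injective prefix
        intro j j' h
        simp only [hSig] at h
        rw [hC j, hC j'] at h
        have h2 := add_right_cancel h
        exact (finRotate m).injective (c.injective (cast_fin_inj h2))
      · exact (park_comp f (Sig c)).mpr hP⟩ with hF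
  apply Fintype.card_of_bijective (f := F)
  constructor
  · -- injective
    rintro ⟨⟨f, c⟩, hPf, hCf⟩ ⟨⟨f', c'⟩, hPf', hCf'⟩ h
    replace hCf : CondZ n m f c := hCf
    replace hCf' : CondZ n m f' c' := hCf'
    have hfun : (fun i => f ((Sig c) i)) = (fun i => f' ((Sig c') i)) :=
      congrArg Subtype.val h
    have hcc : c = c' := by
      ext j
      have hj := congrFun hfun (Fin.castLE hmn ((finRotate m).symm j))
      simp only [hSig] at hj
      have e1 : f (c ((finRotate m).symm j)) = (((c j : ℕ)) : ZMod (n+1)) + 1 := by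
        have := hCf ((finRotate m).symm j)
        rwa [Equiv.apply_symm_apply] at this
      have e2 : f' (c' ((finRotate m).symm j)) = (((c' j : ℕ)) : ZMod (n+1)) + 1 := by
        have := hCf' ((finRotate m).symm j)
        rwa [Equiv.apply_symm_apply] at this
      rw [e1, e2] at hj
      have h2 := add_right_cancel hj
      exact congrArg Fin.val (cast_fin_inj h2)
    subst hcc
    have hff : f = f' := by
      funext i
      have := congrFun hfun ((Sig c).symm i)
      simpa using this
    subst hff
    rfl
  · -- surjective
    rintro ⟨g, hI, hP⟩
    -- reconstruct the cycle from the prefix of g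
    have hval : ∀ j : Fin m, 1 ≤ (g (Fin.castLE hmn j)).val ∧ (g (Fin.castLE hmn j)).val ≤ n :=
      fun j => park_val g hP _
    set cfun : Fin m → Fin n := fun j =>
      ⟨(g (Fin.castLE hmn ((finRotate m).symm j))).val - 1, by
        have := (hval ((finRotate m).symm j)).2
        have h1 := (hval ((finRotate m).symm j)).1
        omega⟩ with hcfun
    have hcinj : Function.Injective cfun := by
      intro j j' h
      have h2 : (g (Fin.castLE hmn ((finRotate m).symm j))).val
          = (g (Fin.castLE hmn ((finRotate m).symm j'))).val := by
        have e := congrArg Fin.val h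
        simp only [hcfun] at e
        have a1 := (hval ((finRotate m).symm j)).1
        have a2 := (hval ((finRotate m).symm j')).1
        omega
      have h3 : g (Fin.castLE hmn ((finRotate m).symm j))
          = g (Fin.castLE hmn ((finRotate m).symm j')) := by
        have := congrArg (fun v : ℕ => (v : ZMod (n+1))) h2
        simpa only [cast_val_eq] using this
      have h4 := hI h3
      exact (finRotate m).symm.injective h4
    set c : Fin m ↪ Fin n := ⟨cfun, hcinj⟩ with hc
    -- the preimage
    have hkey : ∀ j : Fin m, ((c (finRotate m j) : ℕ) : ZMod (n+1)) + 1
        = g (Fin.castLE hmn j) := by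
      intro j
      have h1 : c (finRotate m j) = cfun (finRotate m j) := rfl
      rw [h1, hcfun]
      simp only [Equiv.symm_apply_apply]
      have h2 := (hval j).1
      have h3 := (hval j).2
      have h4 : ((g (Fin.castLE hmn j)).val - 1 : ℕ) + 1 = (g (Fin.castLE hmn j)).val := by omega
      have h5 : ((((g (Fin.castLE hmn j)).val - 1 : ℕ)) : ZMod (n+1)) + 1
          = ((((g (Fin.castLE hmn j)).val : ℕ)) : ZMod (n+1)) := by
        rw [← h4]
        push_cast
        ring
      rw [h5, cast_val_eq]
    refine ⟨⟨(fun i => g ((Sig c).symm i), c), ?_, ?_⟩, ?_⟩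
    · -- Park
      exact (park_comp g (Sig c).symm).mpr hP
    · -- CondZ
      intro j
      have h1 : (Sig c).symm (c j) = Fin.castLE hmn j := by
        rw [Equiv.symm_apply_eq, hSig]
      simp only [h1]
      rw [hkey j]
    · -- F of it equals g
      apply Subtype.ext
      funext i
      simp only [hF, Equiv.symm_apply_apply, Equiv.apply_symm_apply]

lemma injPre_shift (hmn : m ≤ n) (f : Fin n → ZMod (n+1)) (k : ZMod (n+1))
    (hf : InjPre n m hmn f) : InjPre n m hmn (fun i => f i + k) := by
  intro j j' h
  simp only [] at h
  exact hf (add_right_cancel h)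

lemma card_W (hmn : m ≤ n) :
    Fintype.card {f : Fin n → ZMod (n+1) // InjPre n m hmn f}
      = (n+1).descFactorial m * (n+1)^(n-m) := by
  classical
  have E : {f : Fin n → ZMod (n+1) // InjPre n m hmn f}
      ≃ {v : Fin m → ZMod (n+1) // Function.Injective v}
        × ({i : Fin n // ¬ (i : ℕ) < m} → ZMod (n+1)) := by
    refine
      { toFun := fun f => ⟨⟨fun j => f.1 (Fin.castLE hmn j), f.2⟩, fun i => f.1 i.1⟩
        invFun := fun p => ⟨fun i => if h : (i : ℕ) < m then p.1.1 ⟨(i : ℕ), h⟩ else p.2 ⟨i, h⟩, ?_⟩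
        left_inv := ?_
        right_inv := ?_ }
    · intro j j' h
      simp only [] at h
      have hj : ((Fin.castLE hmn j : Fin n) : ℕ) < m := by simp [j.2]
      have hj' : ((Fin.castLE hmn j' : Fin n) : ℕ) < m := by simp [j'.2]
      rw [dif_pos hj, dif_pos hj'] at h
      have h2 := p.1.2 (a₁ := ⟨((Fin.castLE hmn j : Fin n) : ℕ), hj⟩)
        (a₂ := ⟨((Fin.castLE hmn j' : Fin n) : ℕ), hj'⟩) h
      have h3 := congrArg Fin.val h2
      simp only [Fin.coe_castLE] at h3
      exact Fin.ext h3
    · rintro ⟨f, hf⟩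
      apply Subtype.ext
      funext i
      simp only []
      by_cases h : (i : ℕ) < m
      · rw [dif_pos h]
        exact congrArg f (Fin.ext (by simp))
      · rw [dif_neg h]
    · rintro ⟨⟨v, hv⟩, g⟩
      refine Prod.ext ?_ ?_
      · apply Subtype.ext
        funext j
        simp only []
        have hj : ((Fin.castLE hmn j : Fin n) : ℕ) < m := by simp [j.2]
        rw [dif_pos hj]
        exact congrArg v (Fin.ext (by simp))
      · funext i
        simp only []
        rw [dif_neg i.2]
  rw [Fintype.card_congr E, Fintype.card_prod]
  congr 1
  · rw [Fintype.card_congr (Equiv.subtypeInjectiveEquivEmbedding (Fin m) (ZMod (n+1))),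
      Fintype.card_embedding_eq, ZMod.card, Fintype.card_fin]
  · rw [Fintype.card_fun, ZMod.card]
    congr 1
    have E2 : {i : Fin n // (i : ℕ) < m} ≃ Fin m :=
      { toFun := fun i => ⟨(i : ℕ), i.2⟩
        invFun := fun j => ⟨Fin.castLE hmn j, by simp [j.2]⟩
        left_inv := by rintro ⟨i, hi⟩; apply Subtype.ext; apply Fin.ext; simp
        right_inv := by intro j; apply Fin.ext; simp }
    rw [Fintype.card_subtype_compl, Fintype.card_congr E2, Fintype.card_fin, Fintype.card_fin]

lemma card_Y (hm : 0 < m) (hmn : m ≤ n) :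
    Fintype.card {f : Fin n → ZMod (n+1) // InjPre n m hmn f ∧ Park n f} * (n+1)
      = (n+1).descFactorial m * (n+1)^(n-m) := by
  rw [card_park_shift (InjPre n m hmn) (injPre_shift hmn), card_W hmn]

lemma card_PK :
    Fintype.card {f : Fin n → ZMod (n+1) // Park n f} * (n+1) = (n+1)^n := by
  classical
  have h := card_park_shift (n := n) (fun _ => True) (fun _ _ _ => trivial)
  have E : {f : Fin n → ZMod (n+1) // True ∧ Park n f} ≃ {f : Fin n → ZMod (n+1) // Park n f} :=
    Equiv.subtypeEquivRight (fun f => by simp)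
  have E2 : {f : Fin n → ZMod (n+1) // True} ≃ (Fin n → ZMod (n+1)) :=
    Equiv.subtypeUnivEquiv (fun _ => trivial)
  rw [Fintype.card_congr E, Fintype.card_congr E2] at h
  rw [h, Fintype.card_fun, ZMod.card, Fintype.card_fin]

lemma card_X1_sigma (hm : 0 < m) :
    Fintype.card {p : (Fin n → ZMod (n+1)) × (Fin m ↪ Fin n) // Park n p.1 ∧ CondZ n m p.1 p.2}
      = ∑ f : {f : Fin n → ZMod (n+1) // Park n f},
          Fintype.card {c : Fin m ↪ Fin n // CondZ n m f.1 c} := by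
  classical
  have E : {p : (Fin n → ZMod (n+1)) × (Fin m ↪ Fin n) // Park n p.1 ∧ CondZ n m p.1 p.2}
      ≃ Σ f : {f : Fin n → ZMod (n+1) // Park n f}, {c : Fin m ↪ Fin n // CondZ n m f.1 c} :=
    { toFun := fun p => ⟨⟨p.1.1, p.2.1⟩, ⟨p.1.2, p.2.2⟩⟩
      invFun := fun q => ⟨(q.1.1, q.2.1), q.1.2, q.2.2⟩
      left_inv := by rintro ⟨⟨f, c⟩, h1, h2⟩; rfl
      right_inv := by rintro ⟨⟨f, h1⟩, ⟨c, h2⟩⟩; rfl }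
  rw [Fintype.card_congr E, Fintype.card_sigma]

end Main

end PFAux


open PFAux

/-- The total number of `m`-cycles over all parking functions of length `n` is
`(m-1)! · C(n+1,m) · (n+1)^(n-m-1)`; equivalently the expected number of `m`-cycles
of a uniformly random parking function is `(m-1)! · C(n+1,m)/(n+1)^m`. -/
theorem sum_cycleCount_parkingFunctions (n m : ℕ) (hm : 1 ≤ m) (hmn : m ≤ n) :
    (∑ᶠ π ∈ {π : Fin n → ℕ | IsParkingFunction n π}, (cycleCount n m π : ℚ)) =
      ((m - 1).factorial : ℚ) * ((n + 1).choose m : ℚ) *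
        ((n : ℚ) + 1) ^ ((n : ℤ) - (m : ℤ) - 1) ∧
    (∑ᶠ π ∈ {π : Fin n → ℕ | IsParkingFunction n π}, (cycleCount n m π : ℚ)) /
        (Set.ncard {π : Fin n → ℕ | IsParkingFunction n π} : ℚ) =
      ((m - 1).factorial : ℚ) * ((n + 1).choose m : ℚ) / ((n : ℚ) + 1) ^ m := by
  classical
  have hq0 : ((n:ℚ)+1) ≠ 0 := by positivity
  have hm0 : (m:ℚ) ≠ 0 := Nat.cast_ne_zero.mpr (by omega)
  set A := Fintype.card {f : Fin n → ZMod (n+1) // InjPre n m hmn f ∧ Park n f} with hAdef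
  set P := Fintype.card {f : Fin n → ZMod (n+1) // Park n f} with hPdef
  have hsum : (∑ᶠ π ∈ {π : Fin n → ℕ | IsParkingFunction n π}, (cycleCount n m π : ℚ))
      = (A : ℚ) / m := by
    rw [coe_PFinset, finsum_mem_coe_finset]
    rw [show PFinset n = ((Finset.univ : Finset (Fin n → ZMod (n+1))).filter (Park n)).image
      (toN n) from rfl]
    rw [Finset.sum_image (fun x hx y hy h => toN_injOn hx hy h)]
    have h1 : ∀ f ∈ (Finset.univ : Finset (Fin n → ZMod (n+1))).filter (Park n),
        (cycleCount n m (toN n f) : ℚ)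
          = (Fintype.card {c : Fin m ↪ Fin n // CondZ n m f c} : ℚ) / m := fun f hf =>
      cycleCount_toN (by omega) f (Finset.mem_filter.mp hf).2
    rw [Finset.sum_congr rfl h1, ← Finset.sum_div]
    congr 1
    have h2 : ∑ f ∈ (Finset.univ : Finset (Fin n → ZMod (n+1))).filter (Park n),
        (Fintype.card {c : Fin m ↪ Fin n // CondZ n m f c} : ℚ)
        = ∑ f : {f : Fin n → ZMod (n+1) // Park n f},
            (Fintype.card {c : Fin m ↪ Fin n // CondZ n m f.1 c} : ℚ) := by
      apply Finset.sum_subtype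
      intro x
      simp
    rw [h2, ← Nat.cast_sum, ← card_X1_sigma (by omega : 0 < m),
      card_X1_eq_card_Y (by omega : 0 < m) hmn]
  have hAq : (A : ℚ) * ((n:ℚ)+1)
      = ((n+1).choose m : ℚ) * (m.factorial : ℚ) * ((n:ℚ)+1)^(n-m) := by
    have h := card_Y (n := n) (by omega : 0 < m) hmn
    have hD : (n+1).descFactorial m = (n+1).choose m * m.factorial := by
      rw [Nat.choose_eq_descFactorial_div_factorial]
      exact (Nat.div_mul_cancel (Nat.factorial_dvd_descFactorial _ _)).symm
    rw [hD] at h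
    exact_mod_cast congrArg (Nat.cast : ℕ → ℚ) h
  have hPq : (P:ℚ) * ((n:ℚ)+1) = ((n:ℚ)+1)^n := by
    have h := card_PK (n := n)
    exact_mod_cast congrArg (Nat.cast : ℕ → ℚ) h
  have hncard : (Set.ncard {π : Fin n → ℕ | IsParkingFunction n π} : ℚ) = (P : ℚ) := by
    rw [coe_PFinset, Set.ncard_coe_finset, card_PFinset]
    have h : P = ((Finset.univ : Finset (Fin n → ZMod (n+1))).filter (Park n)).card :=
      Fintype.card_subtype _
    rw [h]
  have hfac : (m.factorial : ℚ) = m * ((m-1).factorial : ℚ) := by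
    obtain ⟨m', rfl⟩ : ∃ m', m = m' + 1 := ⟨m-1, by omega⟩
    rw [Nat.factorial_succ]
    push_cast [Nat.add_sub_cancel]
    ring
  have hzp : ((n:ℚ)+1)^((n:ℤ)-(m:ℤ)-1) = ((n:ℚ)+1)^(n-m) / ((n:ℚ)+1) := by
    have he : (n:ℤ)-(m:ℤ)-1 = ((n-m : ℕ) : ℤ) - 1 := by
      have h2 : ((n-m:ℕ):ℤ) = (n:ℤ) - m := by
        rw [Int.ofNat_sub hmn]
      omega
    rw [he, zpow_sub₀ hq0, zpow_one, zpow_natCast]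
  have hA2 : (A:ℚ) = ((n+1).choose m : ℚ) * (m.factorial:ℚ) * ((n:ℚ)+1)^(n-m) / ((n:ℚ)+1) := by
    rw [eq_div_iff hq0]
    exact hAq
  have hP2 : (P:ℚ) = ((n:ℚ)+1)^n / ((n:ℚ)+1) := by
    rw [eq_div_iff hq0]
    exact hPq
  have hqn : ((n:ℚ)+1)^n = ((n:ℚ)+1)^(n-m) * ((n:ℚ)+1)^m := by
    rw [← pow_add]
    congr 1
    omega
  have hpow0 : ((n:ℚ)+1)^(n-m) ≠ 0 := by positivity
  have hpowm0 : ((n:ℚ)+1)^m ≠ 0 := by positivity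
  constructor
  · rw [hsum, hzp, hA2, hfac]
    field_simp
  · rw [hsum, hncard, hA2, hP2, hfac, hqn]
    field_simp
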